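/- Every perfectly normal ΣΣ*-space is a QN̄-space: if X is a perfectly normal topological space such that every pointwise convergent series of non-negative real-valued functions on X converges pseudo-normally, then every sequence of real-valued functions on X converging pointwise to a function f converges quasi-normally to f. -/

import Mathlib

open Filter Set Topology

theorem perfectlyNormal_SigmaSigmaStar_implies_QNbar'
    {X : Type*} [TopologicalSpace X]
    (h : ∀ f : ℕ → X → ℝ, (∀ n x, 0 ≤ f n x) → (∀ x, Summable (fun n => f n x)) →
    ∃ ε : ℕ → ℝ, (∀ n, 0 < ε n) ∧ Summable ε ∧
      ∀ x : X, ∀ᶠ n in atTop, f n x < ε n) :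
    ∀ (f : ℕ → X → ℝ) (g : X → ℝ),
    (∀ x, Tendsto (fun n => f n x) atTop (nhds (g x))) →
    ∃ ε : ℕ → ℝ, (∀ n, 0 < ε n) ∧ Tendsto ε atTop (nhds 0) ∧
      ∀ x : X, ∀ᶠ n in atTop, |f n x - g x| < ε n := by
  classical
  intro f g hfg
  set d : ℕ → X → ℝ := fun n x => |f n x - g x| with hd
  -- choose m x k with ∀ n ≥ m x k, d n x < 2⁻¹ ^ k
  have hex : ∀ x k, ∃ N : ℕ, ∀ n ≥ N, d n x < (2⁻¹ : ℝ) ^ k := by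
    intro x k
    have h2 : Tendsto (fun n => d n x) atTop (nhds 0) := by
      have := ((hfg x).sub (tendsto_const_nhds (x := g x))).abs
      simpa [hd] using this
    have hpos : (0 : ℝ) < (2⁻¹ : ℝ) ^ k := by positivity
    exact eventually_atTop.mp (h2.eventually (gt_mem_nhds hpos))
  choose m hm using hex
  set e : ℕ × ℕ ≃ ℕ := Denumerable.eqv (ℕ × ℕ) with he
  set G : ℕ × ℕ → X → ℝ := fun p x => if p.2 = m x p.1 then (2⁻¹ : ℝ) ^ p.1 else 0 with hG
  set F : ℕ → X → ℝ := fun j x => G (e.symm j) x with hF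
  have hFnn : ∀ j x, 0 ≤ F j x := by
    intro j x
    simp only [hF, hG]
    split <;> positivity
  have hinj : ∀ x : X, Function.Injective (fun k => (k, m x k)) := by
    intro x a b hab
    exact congrArg Prod.fst hab
  have hGsum : ∀ x, Summable (fun p => G p x) := by
    intro x
    rw [← Function.Injective.summable_iff (hinj x)]
    · have : ((fun p => G p x) ∘ fun k => (k, m x k)) = fun k => (2⁻¹ : ℝ) ^ k := by
        funext k; simp [hG]
      rw [this]
      exact summable_geometric_of_lt_one (by norm_num) (by norm_num)
    · intro p hp
      have : p.2 ≠ m x p.1 := by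
        intro hcon
        exact hp ⟨p.1, by simp [Prod.ext_iff, hcon]⟩
      simp [hG, this]
  have hFsum : ∀ x, Summable (fun j => F j x) := by
    intro x
    exact ((hGsum x).comp_injective e.symm.injective)
  obtain ⟨ε, hεpos, hεsum, hεev⟩ := h F hFnn hFsum
  -- For each k, pick M k beyond which ε (e (k, mm)) < 2⁻¹ ^ k
  have hMex : ∀ k : ℕ, ∃ M : ℕ, ∀ mm ≥ M, ε (e (k, mm)) < (2⁻¹ : ℝ) ^ k := by
    intro k
    have hsum : Summable (fun mm => ε (e (k, mm))) :=
      hεsum.comp_injective (fun a b hab => by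
        have := e.injective hab; exact (Prod.mk.injEq _ _ _ _ ▸ this).2)
    have := hsum.tendsto_atTop_zero
    have hpos : (0 : ℝ) < (2⁻¹ : ℝ) ^ k := by positivity
    exact eventually_atTop.mp (this.eventually (gt_mem_nhds hpos))
  choose M hM using hMex
  set N : ℕ → ℕ := fun k => k + ∑ i ∈ Finset.range (k + 1), M i with hN
  have hNk : ∀ k, k ≤ N k := fun k => Nat.le_add_right _ _
  have hMN : ∀ k, M k ≤ N k := by
    intro k
    calc M k ≤ ∑ i ∈ Finset.range (k + 1), M i :=
          Finset.single_le_sum (f := M) (fun i _ => Nat.zero_le _) (Finset.self_mem_range_succ k)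
      _ ≤ N k := Nat.le_add_left _ _
  set kk : ℕ → ℕ := fun n => Nat.findGreatest (fun k => N k ≤ n) n with hkk
  have hkkTop : Tendsto kk atTop atTop := by
    apply tendsto_atTop_atTop.2
    intro K
    refine ⟨N K, fun n hn => ?_⟩
    exact Nat.le_findGreatest (le_trans (hNk K) hn) hn
  refine ⟨fun n => (2⁻¹ : ℝ) ^ (kk n), fun n => by positivity, ?_, ?_⟩
  · have := (tendsto_pow_atTop_nhds_zero_of_lt_one (r := (2⁻¹ : ℝ)) (by norm_num)
      (by norm_num)).comp hkkTop
    exact this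
  · intro x
    obtain ⟨J, hJ⟩ := eventually_atTop.mp (hεev x)
    -- all but finitely many k have e (k, m x k) ≥ J
    have hfin : {k : ℕ | e (k, m x k) < J}.Finite := by
      apply Set.Finite.preimage (f := fun k => e (k, m x k)) ?_ (Set.finite_Iio J)
      exact Function.Injective.injOn (fun a b hab => congrArg Prod.fst (e.injective hab))
    obtain ⟨K0, hK0⟩ := hfin.bddAbove
    -- for k > K0: m x k ≤ N k
    have hkey : ∀ k, K0 < k → m x k ≤ N k := by
      intro k hk
      have hJk : J ≤ e (k, m x k) := by
        by_contra hcon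
        exact absurd (hK0 (show k ∈ _ from not_le.mp hcon)) (not_le.mpr hk)
      have h1 : F (e (k, m x k)) x < ε (e (k, m x k)) := hJ _ hJk
      have h2 : F (e (k, m x k)) x = (2⁻¹ : ℝ) ^ k := by
        simp [hF, hG]
      by_contra hcon
      have hmk : M k ≤ m x k := le_trans (hMN k) (le_of_lt (not_le.mp hcon))
      have := hM k (m x k) hmk
      rw [h2] at h1
      exact absurd (lt_trans h1 this) (lt_irrefl _)
    refine eventually_atTop.2 ⟨N (K0 + 1), fun n hn => ?_⟩
    have hkge : K0 + 1 ≤ kk n :=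
      Nat.le_findGreatest (P := fun k => N k ≤ n) (le_trans (hNk _) hn) hn
    have hNle : N (kk n) ≤ n :=
      Nat.findGreatest_spec (P := fun k => N k ≤ n) (m := K0 + 1) (le_trans (hNk _) hn) hn
    have hmle : m x (kk n) ≤ n := le_trans (hkey _ hkge) hNle
    exact hm x (kk n) n hmle


/-- A space is a ΣΣ*-space if every pointwise convergent series of non-negative
real-valued functions converges pseudo-normally. -/
def SigmaSigmaStarSpace (X : Type*) [TopologicalSpace X] : Prop :=
  ∀ f : ℕ → X → ℝ, (∀ n x, 0 ≤ f n x) → (∀ x, Summable (fun n => f n x)) →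
    ∃ ε : ℕ → ℝ, (∀ n, 0 < ε n) ∧ Summable ε ∧
      ∀ x : X, ∀ᶠ n in atTop, f n x < ε n

/-- A space is a QN̄-space if every pointwise convergent sequence of real-valued
functions converges quasi-normally to its limit. -/
def QNbarSpace (X : Type*) [TopologicalSpace X] : Prop :=
  ∀ (f : ℕ → X → ℝ) (g : X → ℝ),
    (∀ x, Tendsto (fun n => f n x) atTop (nhds (g x))) →
    ∃ ε : ℕ → ℝ, (∀ n, 0 < ε n) ∧ Tendsto ε atTop (nhds 0) ∧
      ∀ x : X, ∀ᶠ n in atTop, |f n x - g x| < ε n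

theorem perfectlyNormal_SigmaSigmaStar_implies_QNbar
    {X : Type*} [TopologicalSpace X] [PerfectlyNormalSpace X]
    (h : SigmaSigmaStarSpace X) : QNbarSpace X :=
  perfectlyNormal_SigmaSigmaStar_implies_QNbar' h
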